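/- arXiv:2504.06238 — 2 statements merged into one kernel-verified Lean document; each statement's English description precedes it below -/
import Mathlib

section
/- Let ξ ∈ W^{2,∞}(𝒪;ℝ²) be divergence-free and tangent to ∂𝒪, and let B f := ℒ_ξ f + 𝒯_ξ f with adjoint B* = −ℒ_ξ + 𝒯_ξ* (densely defined on W^{1,2}). Then there exists a constant c such that for all f ∈ W^{1,2}(𝒪;ℝ²): (i) ⟨B f, B* f⟩ + ‖B f‖²_{L²} ≤ c ‖ξ‖²_{W^{2,∞}} ‖f‖²_{L²}, and (ii) ⟨B f, f⟩² ≤ c ‖ξ‖²_{W^{1,∞}} ‖f‖⁴_{L²}. -/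
open MeasureTheory Real Set Filter Topology
open scoped ENNReal

noncomputable section

abbrev E2 := EuclideanSpace ℝ (Fin 2)

/-- The transport term `ℒ_ξ f = (ξ·∇)f`. -/
def Ltrans (ξ f : E2 → E2) : E2 → E2 := fun x => fderiv ℝ f x (ξ x)

/-- The stretching operator `𝒯_ξ f = Σ_j f^j ∇ξ^j = (Dξ(x))* f(x)`. -/
def Tstretch (ξ f : E2 → E2) : E2 → E2 :=
  fun x => ContinuousLinearMap.adjoint (fderiv ℝ ξ x) (f x)

/-- The transport-stretching operator `B f = ℒ_ξ f + 𝒯_ξ f`. -/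
def Bop (ξ f : E2 → E2) : E2 → E2 := fun x => Ltrans ξ f x + Tstretch ξ f x

/-- The adjoint `B* f = −ℒ_ξ f + 𝒯_ξ* f`, where `𝒯_ξ* f(x) = Dξ(x) f(x)`. -/
def Bstar (ξ f : E2 → E2) : E2 → E2 := fun x => -Ltrans ξ f x + fderiv ℝ ξ x (f x)

/-- The `W^{1,∞}(𝒪;ℝ²)` norm. -/
def W1infNorm (O : Set E2) (h : E2 → E2) : ℝ :=
  ⨆ x : closure O, (‖h (x : E2)‖ ⊔ ‖fderiv ℝ h (x : E2)‖)

/-- The `W^{2,∞}(𝒪;ℝ²)` norm. -/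
def W2infNorm (O : Set E2) (h : E2 → E2) : ℝ :=
  ⨆ x : closure O, (‖h (x : E2)‖ ⊔ ‖fderiv ℝ h (x : E2)‖ ⊔ ‖iteratedFDeriv ℝ 2 h (x : E2)‖)

set_option maxHeartbeats 2000000 in
private lemma cont_adjoint' : Continuous (fun A : E2 →L[ℝ] E2 => ContinuousLinearMap.adjoint A) :=
  (ContinuousLinearMap.adjoint (E := E2) (F := E2) (𝕜 := ℝ)).continuous

set_option maxHeartbeats 2000000 in
/-- The key cancellation estimates for the transport-stretching noise operator:
(i) `⟨Bf, B*f⟩ + ‖Bf‖² ≤ c‖ξ‖²_{W^{2,∞}}‖f‖²_{L²}` and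
(ii) `⟨Bf, f⟩² ≤ c‖ξ‖²_{W^{1,∞}}‖f‖⁴_{L²}`, for `ξ ∈ W^{2,∞}` divergence-free and
tangent to the boundary (encoded weakly by orthogonality to gradients). -/
theorem noise_cancellation_estimates (O : Set E2) (hO : IsOpen O)
    (hOb : Bornology.IsBounded O) (ξ : E2 → E2) (hξ : ContDiff ℝ 2 ξ)
    (hσ : ∀ ψ : E2 → ℝ, ContDiff ℝ 1 ψ → (∫ x in O, fderiv ℝ ψ x (ξ x)) = 0) :
    ∃ c > 0, ∀ f : E2 → E2, ContDiff ℝ 1 f →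
      ((∫ x in O, (inner ℝ (Bop ξ f x) (Bstar ξ f x) : ℝ)) + ∫ x in O, ‖Bop ξ f x‖ ^ 2 ≤
        c * W2infNorm O ξ ^ 2 * ∫ x in O, ‖f x‖ ^ 2) ∧
      (∫ x in O, (inner ℝ (Bop ξ f x) (f x) : ℝ)) ^ 2 ≤
        c * W1infNorm O ξ ^ 2 * (∫ x in O, ‖f x‖ ^ 2) ^ 2 := by
  have hK : IsCompact (closure O) :=
    Metric.isCompact_of_isClosed_isBounded isClosed_closure hOb.closure
  have hInt : ∀ g : E2 → ℝ, Continuous g → IntegrableOn g O := fun g hg =>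
    (hg.continuousOn.integrableOn_compact hK).mono_set subset_closure
  set T := fderiv ℝ ξ with hTdef
  set DT := fderiv ℝ T with hDTdef
  have hT : ContDiff ℝ 1 T := hξ.fderiv_right (by norm_num)
  have hTc : Continuous T := hT.continuous
  have hξc : Continuous ξ := hξ.continuous
  have hDTc : Continuous DT := hT.continuous_fderiv (by norm_num)
  set M1 := W1infNorm O ξ with hM1def
  set M2 := W2infNorm O ξ with hM2def
  -- bounds
  have hM1b : ∀ x ∈ closure O, (‖ξ x‖ ⊔ ‖T x‖) ≤ M1 := by
    intro x hx
    have hbdd : BddAbove (Set.range fun y : closure O => (‖ξ (y : E2)‖ ⊔ ‖T (y : E2)‖)) := by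
      have : Set.range (fun y : closure O => (‖ξ (y : E2)‖ ⊔ ‖T (y : E2)‖)) =
          (fun y => ‖ξ y‖ ⊔ ‖T y‖) '' closure O := by
        ext r; simp [Set.range, Set.mem_image]
      rw [this]
      exact hK.bddAbove_image ((hξc.norm.max hTc.norm)).continuousOn
    exact le_ciSup hbdd ⟨x, hx⟩
  have hM2b : ∀ x ∈ closure O, (‖ξ x‖ ⊔ ‖T x‖ ⊔ ‖iteratedFDeriv ℝ 2 ξ x‖) ≤ M2 := by
    intro x hx
    have hc2 : Continuous fun y => ‖iteratedFDeriv ℝ 2 ξ y‖ :=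
      (hξ.continuous_iteratedFDeriv le_rfl).norm
    have hbdd : BddAbove (Set.range fun y : closure O =>
        (‖ξ (y : E2)‖ ⊔ ‖T (y : E2)‖ ⊔ ‖iteratedFDeriv ℝ 2 ξ (y : E2)‖)) := by
      have : Set.range (fun y : closure O =>
          (‖ξ (y : E2)‖ ⊔ ‖T (y : E2)‖ ⊔ ‖iteratedFDeriv ℝ 2 ξ (y : E2)‖)) =
          (fun y => ‖ξ y‖ ⊔ ‖T y‖ ⊔ ‖iteratedFDeriv ℝ 2 ξ y‖) '' closure O := by
        ext r; simp [Set.range, Set.mem_image]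
      rw [this]
      exact hK.bddAbove_image (((hξc.norm.max hTc.norm).max hc2)).continuousOn
    exact le_ciSup hbdd ⟨x, hx⟩
  have hDTnorm : ∀ x, ‖DT x‖ = ‖iteratedFDeriv ℝ 2 ξ x‖ := by
    intro x
    have h1 : ‖iteratedFDeriv ℝ 0 (fderiv ℝ T) x‖ = ‖iteratedFDeriv ℝ 1 T x‖ :=
      norm_iteratedFDeriv_fderiv
    have h2 : ‖iteratedFDeriv ℝ 1 T x‖ = ‖iteratedFDeriv ℝ 2 ξ x‖ :=
      norm_iteratedFDeriv_fderiv
    rw [← h2, ← h1, norm_iteratedFDeriv_zero]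
  have hM1nn : 0 ≤ M1 :=
    Real.iSup_nonneg fun y => le_trans (norm_nonneg _) (le_max_left _ _)
  have hM2nn : 0 ≤ M2 :=
    Real.iSup_nonneg fun y => le_trans (norm_nonneg _)
      (le_trans (le_max_left _ _) (le_max_left _ _))
  refine ⟨3, by norm_num, fun f hf => ?_⟩
  have hfd : Differentiable ℝ f := hf.differentiable (by norm_num)
  have hDfc : Continuous (fderiv ℝ f) := hf.continuous_fderiv (by norm_num)
  have hfc : Continuous f := hf.continuous
  have hLc : Continuous (Ltrans ξ f) := hDfc.clm_apply hξc
  have hSc : Continuous (Tstretch ξ f) := (cont_adjoint'.comp hTc).clm_apply hfc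
  have hBc : Continuous (Bop ξ f) := hLc.add hSc
  have hBsc : Continuous (Bstar ξ f) := hLc.neg.add (hTc.clm_apply hfc)
  have hf2int : IntegrableOn (fun x => ‖f x‖ ^ 2) O := hInt _ (hfc.norm.pow 2)
  have hf2nn : 0 ≤ ∫ x in O, ‖f x‖ ^ 2 :=
    integral_nonneg fun x => by positivity
  -- ===== part (ii) =====
  have part2 : (∫ x in O, (inner ℝ (Bop ξ f x) (f x) : ℝ)) ^ 2 ≤
      3 * M1 ^ 2 * (∫ x in O, ‖f x‖ ^ 2) ^ 2 := by
    have hψ2 : ContDiff ℝ 1 (fun x => (inner ℝ (f x) (f x) : ℝ)) := hf.inner ℝ hf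
    have key2 : ∀ x, fderiv ℝ (fun x => (inner ℝ (f x) (f x) : ℝ)) x (ξ x)
        = 2 * (inner ℝ (Ltrans ξ f x) (f x) : ℝ) := by
      intro x
      have h := ((hfd x).hasFDerivAt.inner ℝ (hfd x).hasFDerivAt).fderiv
      rw [h]
      simp only [ContinuousLinearMap.comp_apply, ContinuousLinearMap.prod_apply,
        fderivInnerCLM_apply, Ltrans]
      rw [real_inner_comm (f x)]
      ring
    have hI0 : ∫ x in O, (inner ℝ (Ltrans ξ f x) (f x) : ℝ) = 0 := by
      have h := hσ _ hψ2
      have heq : (∫ x in O, fderiv ℝ (fun x => (inner ℝ (f x) (f x) : ℝ)) x (ξ x))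
          = ∫ x in O, 2 * (inner ℝ (Ltrans ξ f x) (f x) : ℝ) := by
        apply integral_congr_ae
        filter_upwards with x using key2 x
      rw [heq, integral_const_mul] at h
      linarith
    have hinner_int : IntegrableOn (fun x => (inner ℝ (Ltrans ξ f x) (f x) : ℝ)) O :=
      hInt _ (hLc.inner hfc)
    have hinner_int2 : IntegrableOn (fun x => (inner ℝ (f x) (T x (f x)) : ℝ)) O :=
      hInt _ (hfc.inner (hTc.clm_apply hfc))
    have hsplit : ∫ x in O, (inner ℝ (Bop ξ f x) (f x) : ℝ)
        = ∫ x in O, (inner ℝ (f x) (T x (f x)) : ℝ) := by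
      have : ∀ x, (inner ℝ (Bop ξ f x) (f x) : ℝ)
          = (inner ℝ (Ltrans ξ f x) (f x) : ℝ) + (inner ℝ (f x) (T x (f x)) : ℝ) := by
        intro x
        simp only [Bop, inner_add_left, Tstretch]
        rw [ContinuousLinearMap.adjoint_inner_left]
      rw [integral_congr_ae (Filter.Eventually.of_forall fun x => this x),
        integral_add hinner_int hinner_int2, hI0, zero_add]
    have habs : |∫ x in O, (inner ℝ (f x) (T x (f x)) : ℝ)| ≤ M1 * ∫ x in O, ‖f x‖ ^ 2 := by
      have h1 : |∫ x in O, (inner ℝ (f x) (T x (f x)) : ℝ)|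
          ≤ ∫ x in O, |(inner ℝ (f x) (T x (f x)) : ℝ)| := by
        simpa [Real.norm_eq_abs] using
          norm_integral_le_integral_norm (μ := volume.restrict O)
            (fun x => (inner ℝ (f x) (T x (f x)) : ℝ))
      refine h1.trans ?_
      rw [← integral_const_mul]
      apply setIntegral_mono_on (hInt _ (hfc.inner (hTc.clm_apply hfc))).abs
        (hf2int.const_mul M1) hO.measurableSet
      intro x hx
      have hb : ‖T x‖ ≤ M1 :=
        le_trans (le_max_right _ _) (hM1b x (subset_closure hx))
      calc |(inner ℝ (f x) (T x (f x)) : ℝ)| ≤ ‖f x‖ * ‖T x (f x)‖ := abs_real_inner_le_norm _ _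
        _ ≤ ‖f x‖ * (‖T x‖ * ‖f x‖) := by
            exact mul_le_mul_of_nonneg_left ((T x).le_opNorm _) (norm_nonneg _)
        _ ≤ M1 * ‖f x‖ ^ 2 := by nlinarith [norm_nonneg (f x), norm_nonneg (T x)]
    rw [hsplit]
    set a := ∫ x in O, (inner ℝ (f x) (T x (f x)) : ℝ)
    set I := ∫ x in O, ‖f x‖ ^ 2
    have h2 : a ^ 2 ≤ (M1 * I) ^ 2 := by
      calc a ^ 2 = |a| ^ 2 := (sq_abs a).symm
        _ ≤ (M1 * I) ^ 2 := pow_le_pow_left₀ (abs_nonneg _) habs 2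
    have hnn : 0 ≤ M1 ^ 2 * I ^ 2 := by positivity
    calc a ^ 2 ≤ (M1 * I) ^ 2 := h2
      _ = M1 ^ 2 * I ^ 2 := by ring
      _ ≤ 3 * M1 ^ 2 * I ^ 2 := by linarith
  -- ===== part (i) =====
  have part1 : (∫ x in O, (inner ℝ (Bop ξ f x) (Bstar ξ f x) : ℝ)) + ∫ x in O, ‖Bop ξ f x‖ ^ 2 ≤
      3 * M2 ^ 2 * ∫ x in O, ‖f x‖ ^ 2 := by
    have hψ1 : ContDiff ℝ 1 (fun x => (inner ℝ (f x) (T x (f x)) : ℝ)) :=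
      hf.inner ℝ (hT.clm_apply hf)
    have key1 : ∀ x, fderiv ℝ (fun x => (inner ℝ (f x) (T x (f x)) : ℝ)) x (ξ x)
        = inner ℝ (Ltrans ξ f x) (T x (f x)) + (inner ℝ (f x) (T x (Ltrans ξ f x))
          + (inner ℝ (f x) ((DT x (ξ x)) (f x)) : ℝ)) := by
      intro x
      have hg : HasFDerivAt (fun y => T y (f y))
          ((T x).comp (fderiv ℝ f x) + (DT x).flip (f x)) x :=
        ((hT.differentiable (by norm_num) x).hasFDerivAt).clm_apply (hfd x).hasFDerivAt
      have h := ((hfd x).hasFDerivAt.inner ℝ hg).fderiv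
      rw [h]
      simp only [ContinuousLinearMap.comp_apply, ContinuousLinearMap.prod_apply,
        fderivInnerCLM_apply, ContinuousLinearMap.add_apply, ContinuousLinearMap.flip_apply,
        inner_add_right, Ltrans]
      ring
    set Rf : E2 → ℝ := fun x => (inner ℝ (Tstretch ξ f x) (Tstretch ξ f x + T x (f x)) : ℝ)
      - (inner ℝ (f x) ((DT x (ξ x)) (f x)) : ℝ) with hRfdef
    have hRfc : Continuous Rf :=
      (hSc.inner (hSc.add (hTc.clm_apply hfc))).sub
        (hfc.inner (((hDTc.clm_apply hξc)).clm_apply hfc))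
    have ptid : ∀ x, (inner ℝ (Bop ξ f x) (Bstar ξ f x) : ℝ) + ‖Bop ξ f x‖ ^ 2
        = fderiv ℝ (fun x => (inner ℝ (f x) (T x (f x)) : ℝ)) x (ξ x) + Rf x := by
      intro x
      have hB : (inner ℝ (Bop ξ f x) (Bstar ξ f x) : ℝ) + ‖Bop ξ f x‖ ^ 2
          = inner ℝ (Bop ξ f x) (Tstretch ξ f x + T x (f x)) := by
        rw [← real_inner_self_eq_norm_sq, ← inner_add_right]
        congr 1
        simp only [Bop, Bstar]
        abel
      rw [hB, key1 x]
      have hadj : (inner ℝ (Ltrans ξ f x) (Tstretch ξ f x) : ℝ)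
          = inner ℝ (f x) (T x (Ltrans ξ f x)) := by
        rw [real_inner_comm, Tstretch]
        exact ContinuousLinearMap.adjoint_inner_left _ _ _
      simp only [Bop, inner_add_left, inner_add_right, hRfdef]
      rw [hadj]
      ring
    have hfint1 : IntegrableOn
        (fun x => fderiv ℝ (fun x => (inner ℝ (f x) (T x (f x)) : ℝ)) x (ξ x)) O :=
      hInt _ ((hψ1.continuous_fderiv (by norm_num)).clm_apply hξc)
    have hIsum : (∫ x in O, (inner ℝ (Bop ξ f x) (Bstar ξ f x) : ℝ)) + ∫ x in O, ‖Bop ξ f x‖ ^ 2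
        = ∫ x in O, Rf x := by
      rw [← integral_add (hInt _ (hBc.inner hBsc)) (hInt (fun x => ‖Bop ξ f x‖ ^ 2) (hBc.norm.pow 2))]
      rw [integral_congr_ae (Filter.Eventually.of_forall fun x => ptid x)]
      rw [integral_add hfint1 (hInt _ hRfc), hσ _ hψ1, zero_add]
    rw [hIsum]
    have hbound : ∀ x ∈ O, Rf x ≤ 3 * M2 ^ 2 * ‖f x‖ ^ 2 := by
      intro x hx
      have hx' := subset_closure hx
      have hb1 : ‖T x‖ ≤ M2 :=
        le_trans (le_trans (le_max_right _ _) (le_max_left _ _)) (hM2b x hx')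
      have hb2 : ‖ξ x‖ ≤ M2 :=
        le_trans (le_trans (le_max_left _ _) (le_max_left _ _)) (hM2b x hx')
      have hb3 : ‖DT x‖ ≤ M2 := by
        rw [hDTnorm x]; exact le_trans (le_max_right _ _) (hM2b x hx')
      have hTs : ‖Tstretch ξ f x‖ ≤ M2 * ‖f x‖ := by
        have h1 : ‖ContinuousLinearMap.adjoint (T x)‖ = ‖T x‖ :=
          (ContinuousLinearMap.adjoint (𝕜 := ℝ) (E := E2) (F := E2)).norm_map (T x)
        calc ‖Tstretch ξ f x‖ ≤ ‖ContinuousLinearMap.adjoint (T x)‖ * ‖f x‖ :=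
              (ContinuousLinearMap.le_opNorm _ _)
          _ = ‖T x‖ * ‖f x‖ := by rw [h1]
          _ ≤ M2 * ‖f x‖ := mul_le_mul_of_nonneg_right hb1 (norm_nonneg _)
      have hTf : ‖T x (f x)‖ ≤ M2 * ‖f x‖ :=
        le_trans ((T x).le_opNorm _) (mul_le_mul_of_nonneg_right hb1 (norm_nonneg _))
      have hDTf : ‖(DT x (ξ x)) (f x)‖ ≤ M2 * M2 * ‖f x‖ := by
        calc ‖(DT x (ξ x)) (f x)‖ ≤ ‖DT x (ξ x)‖ * ‖f x‖ :=
              (ContinuousLinearMap.le_opNorm _ _)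
          _ ≤ (‖DT x‖ * ‖ξ x‖) * ‖f x‖ :=
              mul_le_mul_of_nonneg_right ((DT x).le_opNorm _) (norm_nonneg _)
          _ ≤ M2 * M2 * ‖f x‖ := by
              have hp : ‖DT x‖ * ‖ξ x‖ ≤ M2 * M2 :=
                mul_le_mul hb3 hb2 (norm_nonneg _) hM2nn
              exact mul_le_mul_of_nonneg_right hp (norm_nonneg _)
      have e1 : (inner ℝ (Tstretch ξ f x) (Tstretch ξ f x + T x (f x)) : ℝ)
          ≤ (M2 * ‖f x‖) * (M2 * ‖f x‖ + M2 * ‖f x‖) := by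
        calc (inner ℝ (Tstretch ξ f x) (Tstretch ξ f x + T x (f x)) : ℝ)
            ≤ ‖Tstretch ξ f x‖ * ‖Tstretch ξ f x + T x (f x)‖ := real_inner_le_norm _ _
          _ ≤ (M2 * ‖f x‖) * (M2 * ‖f x‖ + M2 * ‖f x‖) := by
              apply mul_le_mul hTs (le_trans (norm_add_le _ _) (add_le_add hTs hTf))
                (norm_nonneg _) (by positivity)
      have e2 : -(inner ℝ (f x) ((DT x (ξ x)) (f x)) : ℝ) ≤ M2 * M2 * ‖f x‖ * ‖f x‖ := by
        have := abs_real_inner_le_norm (f x) ((DT x (ξ x)) (f x))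
        have h3 : ‖f x‖ * ‖(DT x (ξ x)) (f x)‖ ≤ ‖f x‖ * (M2 * M2 * ‖f x‖) :=
          mul_le_mul_of_nonneg_left hDTf (norm_nonneg _)
        have h4 := neg_abs_le (inner ℝ (f x) ((DT x (ξ x)) (f x)) : ℝ)
        nlinarith
      simp only [hRfdef]
      nlinarith [e1, e2]
    calc ∫ x in O, Rf x ≤ ∫ x in O, 3 * M2 ^ 2 * ‖f x‖ ^ 2 :=
          setIntegral_mono_on (hInt _ hRfc) (hf2int.const_mul _) hO.measurableSet hbound
      _ = 3 * M2 ^ 2 * ∫ x in O, ‖f x‖ ^ 2 := integral_const_mul _ _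
  exact ⟨part1, part2⟩
end
end

section
/- Let (X_n) be a sequence of random variables with values in a Polish space 𝒴 (with its Borel σ-algebra). Then (X_n) converges in probability to some 𝒴-valued random variable X if and only if for every pair of subsequences (X_{l_k}) and (X_{m_k}), the sequence of pairs (X_{l_k}, X_{m_k}) admits a further subsequence converging in law in 𝒴 × 𝒴 to a random variable supported on the diagonal {(y,y) : y ∈ 𝒴}. -/
open MeasureTheory Filter Topology

noncomputable section


lemma exists_strictMono_pair {P : ℕ → ℕ → Prop}
    (h : ∀ N, ∃ a, N ≤ a ∧ ∃ b, N ≤ b ∧ P a b) :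
    ∃ l m : ℕ → ℕ, StrictMono l ∧ StrictMono m ∧ ∀ k, P (l k) (m k) := by
  choose a ha b hb hP using h
  let g : ℕ → ℕ := fun k => Nat.rec 0 (fun k' N => max (a N) (b N) + 1) k
  have hg : ∀ k, g (k + 1) = max (a (g k)) (b (g k)) + 1 := fun k => rfl
  refine ⟨fun k => a (g k), fun k => b (g k), ?_, ?_, fun k => hP _⟩
  · refine strictMono_nat_of_lt_succ fun k => ?_
    calc a (g k) < max (a (g k)) (b (g k)) + 1 := by omega
    _ ≤ a (g (k+1)) := by rw [← hg]; exact ha _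
  · refine strictMono_nat_of_lt_succ fun k => ?_
    calc b (g k) < max (a (g k)) (b (g k)) + 1 := by omega
    _ ≤ b (g (k+1)) := by rw [← hg]; exact hb _

lemma tendstoInMeasure_prod {Ω Y : Type*} [MeasurableSpace Ω] [MetricSpace Y]
    {μ : Measure Ω} {f g : ℕ → Ω → Y} {F G : Ω → Y}
    (hf : TendstoInMeasure μ f atTop F) (hg : TendstoInMeasure μ g atTop G) :
    TendstoInMeasure μ (fun n ω => (f n ω, g n ω)) atTop (fun ω => (F ω, G ω)) := by
  rw [tendstoInMeasure_iff_dist] at hf hg ⊢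
  intro ε hε
  have hsum : Tendsto (fun n => μ {ω | ε ≤ dist (f n ω) (F ω)}
      + μ {ω | ε ≤ dist (g n ω) (G ω)}) atTop (𝓝 0) := by
    simpa using (hf ε hε).add (hg ε hε)
  refine tendsto_of_tendsto_of_tendsto_of_le_of_le tendsto_const_nhds hsum
    (fun n => zero_le) (fun n => ?_)
  refine le_trans (measure_mono ?_) (measure_union_le _ _)
  intro ω hω
  simp only [Set.mem_setOf_eq, Prod.dist_eq] at hω
  rcases le_max_iff.mp hω with h | h
  · exact Or.inl h
  · exact Or.inr h


lemma exists_limit_of_cauchyInMeasure {Ω Y : Type*} [MeasurableSpace Ω]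
    [MetricSpace Y] [CompleteSpace Y] [SecondCountableTopology Y]
    [MeasurableSpace Y] [BorelSpace Y]
    (μ : Measure Ω) [IsProbabilityMeasure μ]
    (X : ℕ → Ω → Y) (hX : ∀ n, Measurable (X n))
    (hcau : ∀ ε : ℝ, 0 < ε → ∀ δ : ENNReal, 0 < δ → ∃ N, ∀ n, N ≤ n → ∀ m, N ≤ m →
      μ {ω | ε ≤ dist (X n ω) (X m ω)} ≤ δ) :
    ∃ Z : Ω → Y, Measurable Z ∧ TendstoInMeasure μ X atTop Z := by
  -- choose the comparison levels
  have hhalf : ∀ k : ℕ, (0:ℝ) < (1/2)^k := fun k => pow_pos (by norm_num) k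
  have hhalf' : ∀ k : ℕ, (0:ENNReal) < 2⁻¹ ^ k :=
    fun k => ENNReal.pow_pos (by simp) k
  choose Ns hNs using fun k => hcau ((1/2)^k) (hhalf k) (2⁻¹ ^ k) (hhalf' k)
  -- strictly monotone subsequence indices
  let n : ℕ → ℕ := fun k => Nat.rec (Ns 0) (fun k' nk => max (Ns (k'+1)) (nk+1)) k
  have hn_succ : ∀ k, n (k+1) = max (Ns (k+1)) (n k + 1) := fun k => rfl
  have hn_mono : StrictMono n := strictMono_nat_of_lt_succ fun k => by
    rw [hn_succ]; omega
  have hn_ge : ∀ k, Ns k ≤ n k := by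
    intro k; cases k with
    | zero => exact le_refl _
    | succ k' => rw [hn_succ]; omega
  -- the bad sets
  set E : ℕ → Set Ω := fun k => {ω | (1/2:ℝ)^k ≤ dist (X (n (k+1)) ω) (X (n k) ω)} with hE
  have hEmeas : ∀ k, μ (E k) ≤ 2⁻¹ ^ k := by
    intro k
    exact hNs k (n (k+1)) (le_trans (hn_ge k) (le_of_lt (hn_mono (Nat.lt_succ_self k))))
      (n k) (hn_ge k)
  have htsum : (∑' k, μ (E k)) ≠ ⊤ := by
    refine ne_top_of_le_ne_top ?_ (ENNReal.tsum_le_tsum hEmeas)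
    rw [ENNReal.tsum_geometric]
    simp [ENNReal.one_sub_inv_two]
  have hBC : ∀ᵐ ω ∂μ, ∀ᶠ k in atTop, ω ∉ E k := ae_eventually_notMem htsum
  -- a.e. the subsequence is Cauchy hence converges
  have hconv : ∀ᵐ ω ∂μ, ∃ z, Tendsto (fun k => X (n k) ω) atTop (𝓝 z) := by
    filter_upwards [hBC] with ω hω
    obtain ⟨K, hK⟩ := eventually_atTop.mp hω
    have hc : CauchySeq (fun j => X (n (j + K)) ω) := by
      refine cauchySeq_of_le_geometric (1/2) ((1/2)^K) (by norm_num) fun j => ?_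
      have h1 : ω ∉ E (j + K) := hK _ (Nat.le_add_left K j)
      simp only [hE, Set.mem_setOf_eq, not_le] at h1
      have : dist (X (n (j + K)) ω) (X (n (j + K + 1)) ω) ≤ (1/2:ℝ)^(j+K) :=
        (dist_comm (X (n (j + K + 1)) ω) (X (n (j + K)) ω) ▸ h1.le)
      calc dist (X (n (j + K)) ω) (X (n (j + 1 + K)) ω)
          = dist (X (n (j + K)) ω) (X (n (j + K + 1)) ω) := by ring_nf
        _ ≤ (1/2:ℝ)^(j+K) := this
        _ = (1/2)^K * (1/2)^j := by rw [pow_add]; ring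
    obtain ⟨z, hz⟩ := cauchySeq_tendsto_of_complete hc
    exact ⟨z, (tendsto_add_atTop_iff_nat K).mp hz⟩
  obtain ⟨Z, hZmeas, hZae⟩ := measurable_limit_of_tendsto_metrizable_ae
    (fun k => (hX (n k)).aemeasurable) hconv
  refine ⟨Z, hZmeas, ?_⟩
  have hsub : TendstoInMeasure μ (fun k => X (n k)) atTop Z :=
    tendstoInMeasure_of_tendsto_ae (fun k => (hX (n k)).aestronglyMeasurable) hZae
  -- upgrade to the full sequence
  rw [tendstoInMeasure_iff_dist]
  intro ε hε
  rw [ENNReal.tendsto_atTop_zero]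
  intro δ hδ
  obtain ⟨N₁, hN₁⟩ := hcau (ε/2) (half_pos hε) (δ/2) (ENNReal.half_pos hδ.ne')
  obtain ⟨K, hK⟩ := ENNReal.tendsto_atTop_zero.mp (tendstoInMeasure_iff_dist.mp hsub (ε/2) (half_pos hε)) (δ/2)
    (ENNReal.half_pos hδ.ne')
  set k := max K N₁ with hk
  have hnk : N₁ ≤ n k := le_trans (le_max_right _ _) (hn_mono.le_apply)
  refine ⟨N₁, fun i hi => ?_⟩
  have hsubset : {ω | ε ≤ dist (X i ω) (Z ω)} ⊆
      {ω | ε/2 ≤ dist (X i ω) (X (n k) ω)} ∪ {ω | ε/2 ≤ dist (X (n k) ω) (Z ω)} := by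
    intro ω hω
    simp only [Set.mem_setOf_eq] at hω
    by_contra hcon
    simp only [Set.mem_union, Set.mem_setOf_eq, not_or, not_le] at hcon
    have := dist_triangle (X i ω) (X (n k) ω) (Z ω)
    linarith [hcon.1, hcon.2]
  calc μ {ω | ε ≤ dist (X i ω) (Z ω)}
      ≤ μ ({ω | ε/2 ≤ dist (X i ω) (X (n k) ω)} ∪ {ω | ε/2 ≤ dist (X (n k) ω) (Z ω)}) :=
        measure_mono hsubset
    _ ≤ μ {ω | ε/2 ≤ dist (X i ω) (X (n k) ω)} + μ {ω | ε/2 ≤ dist (X (n k) ω) (Z ω)} :=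
        measure_union_le _ _
    _ ≤ δ/2 + δ/2 := add_le_add (hN₁ i hi (n k) hnk) (hK k (le_max_left _ _))
    _ = δ := ENNReal.add_halves δ


/-- The Gyöngy–Krylov characterisation of convergence in probability in a Polish space:
`(X_n)` converges in probability to some random variable `X` if and only if every pair of
subsequences admits a further subsequence whose joint laws converge weakly to a probability
measure supported on the diagonal of `𝒴 × 𝒴`. -/
theorem gyongy_krylov {Ω Y : Type*} [MeasurableSpace Ω]
    [MetricSpace Y] [CompleteSpace Y] [TopologicalSpace.SeparableSpace Y]
    [MeasurableSpace Y] [BorelSpace Y]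
    (μ : Measure Ω) [IsProbabilityMeasure μ]
    (X : ℕ → Ω → Y) (hX : ∀ n, Measurable (X n)) :
    (∃ Z : Ω → Y, Measurable Z ∧ TendstoInMeasure μ X atTop Z) ↔
    (∀ l m : ℕ → ℕ, StrictMono l → StrictMono m →
      ∃ φ : ℕ → ℕ, StrictMono φ ∧
        ∃ ν : Measure (Y × Y), IsProbabilityMeasure ν ∧
          ν {p : Y × Y | p.1 ≠ p.2} = 0 ∧
          ∀ g : BoundedContinuousFunction (Y × Y) ℝ,
            Tendsto (fun k => ∫ ω, g (X (l (φ k)) ω, X (m (φ k)) ω) ∂μ) atTop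
              (𝓝 (∫ p, g p ∂ν))) := by
  haveI : SecondCountableTopology Y := UniformSpace.secondCountable_of_separable Y
  constructor
  · rintro ⟨Z, hZmeas, hZ⟩ l m hl hm
    -- joint sequence tends in measure to (Z, Z)
    have hWl : TendstoInMeasure μ (fun k => X (l k)) atTop Z :=
      fun ε hε => (hZ ε hε).comp hl.tendsto_atTop
    have hWm : TendstoInMeasure μ (fun k => X (m k)) atTop Z :=
      fun ε hε => (hZ ε hε).comp hm.tendsto_atTop
    have hW : TendstoInMeasure μ (fun k ω => (X (l k) ω, X (m k) ω)) atTop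
        (fun ω => (Z ω, Z ω)) := tendstoInMeasure_prod hWl hWm
    obtain ⟨φ, hφ, hae⟩ := hW.exists_seq_tendsto_ae
    refine ⟨φ, hφ, μ.map (fun ω => (Z ω, Z ω)), ?_, ?_, ?_⟩
    · exact Measure.isProbabilityMeasure_map (hZmeas.prodMk hZmeas).aemeasurable
    · have hsetmeas : MeasurableSet {p : Y × Y | p.1 ≠ p.2} := by
        have hd : {p : Y × Y | p.1 ≠ p.2} = (Set.diagonal Y)ᶜ := by
          ext p; simp [Set.diagonal, eq_comm]
        rw [hd]; exact isClosed_diagonal.measurableSet.compl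
      rw [Measure.map_apply (hZmeas.prodMk hZmeas) hsetmeas]
      have hpre : (fun ω => (Z ω, Z ω)) ⁻¹' {p : Y × Y | p.1 ≠ p.2} = ∅ := by
        ext ω; simp
      rw [hpre]; exact measure_empty
    · intro g
      have hint : ∫ p, g p ∂(μ.map fun ω => (Z ω, Z ω)) = ∫ ω, g (Z ω, Z ω) ∂μ :=
        integral_map (hZmeas.prodMk hZmeas).aemeasurable g.continuous.aestronglyMeasurable
      rw [hint]
      refine tendsto_integral_of_dominated_convergence (fun _ => ‖g‖)
        (fun k => (g.continuous.measurable.comp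
          ((hX (l (φ k))).prodMk (hX (m (φ k))))).aestronglyMeasurable)
        (integrable_const _) (fun k => ?_) ?_
      · exact Filter.Eventually.of_forall fun ω => by
          simpa using g.norm_coe_le_norm _
      · filter_upwards [hae] with ω hω
        exact (g.continuous.tendsto _).comp hω
  · intro hyp
    -- Step 1: Cauchy in measure
    have hcau : ∀ ε : ℝ, 0 < ε → ∀ δ : ENNReal, 0 < δ → ∃ N, ∀ n, N ≤ n → ∀ p, N ≤ p →
        μ {ω | ε ≤ dist (X n ω) (X p ω)} ≤ δ := by
      intro ε hε δ hδ
      by_contra hcon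
      push_neg at hcon
      obtain ⟨l, m, hl, hm, hP⟩ := exists_strictMono_pair
        (P := fun a b => δ < μ {ω | ε ≤ dist (X a ω) (X b ω)}) (fun N => by
          obtain ⟨a, ha, b, hb, h⟩ := hcon N
          exact ⟨a, ha, b, hb, h⟩)
      obtain ⟨φ, hφ, ν, hν, hνdiag, hνconv⟩ := hyp l m hl hm
      haveI := hν
      -- push forward measures
      have hpair : ∀ k, Measurable fun ω => (X (l (φ k)) ω, X (m (φ k)) ω) :=
        fun k => (hX _).prodMk (hX _)
      let μs : ℕ → ProbabilityMeasure (Y × Y) := fun k =>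
        ⟨μ.map (fun ω => (X (l (φ k)) ω, X (m (φ k)) ω)),
          Measure.isProbabilityMeasure_map (hpair k).aemeasurable⟩
      let νP : ProbabilityMeasure (Y × Y) := ⟨ν, hν⟩
      have hweak : Tendsto μs atTop (𝓝 νP) := by
        rw [ProbabilityMeasure.tendsto_iff_forall_integral_tendsto]
        intro g
        have : ∀ k, ∫ p, g p ∂(μs k : Measure (Y × Y))
            = ∫ ω, g (X (l (φ k)) ω, X (m (φ k)) ω) ∂μ := fun k =>
          integral_map (hpair k).aemeasurable g.continuous.aestronglyMeasurable
        simp only [this]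
        exact hνconv g
      -- the closed off-diagonal set
      set F : Set (Y × Y) := {p | ε ≤ dist p.1 p.2} with hF
      have hFclosed : IsClosed F :=
        isClosed_le continuous_const (continuous_fst.dist continuous_snd)
      have hνF : ν F = 0 := by
        refine measure_mono_null (fun p hp => ?_) hνdiag
        simp only [hF, Set.mem_setOf_eq] at hp ⊢
        intro hpe
        rw [hpe, dist_self] at hp
        linarith
      have hlimsup := ProbabilityMeasure.limsup_measure_closed_le_of_tendsto hweak hFclosed
      rw [show ((νP : Measure (Y × Y)) F) = 0 from hνF] at hlimsup
      have hterm : ∀ k, δ ≤ (μs k : Measure (Y × Y)) F := by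
        intro k
        have : (μs k : Measure (Y × Y)) F = μ {ω | ε ≤ dist (X (l (φ k)) ω) (X (m (φ k)) ω)} := by
          rw [show (μs k : Measure (Y × Y)) = μ.map (fun ω => (X (l (φ k)) ω, X (m (φ k)) ω)) from rfl,
            Measure.map_apply (hpair k) hFclosed.measurableSet]
          rfl
        rw [this]
        exact (hP (φ k)).le
      have : δ ≤ atTop.limsup fun k => (μs k : Measure (Y × Y)) F :=
        le_limsup_of_frequently_le (Frequently.of_forall hterm)
          (isBoundedUnder_of ⟨1, fun k => prob_le_one⟩)
      exact absurd (le_trans this hlimsup) (not_le.mpr hδ)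
    exact exists_limit_of_cauchyInMeasure μ X hX hcau
end
end
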